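/- arXiv:1409.8125 — 3 statements merged into one kernel-verified Lean document; each statement's English description precedes it below -/
import Mathlib

section
/- Let M ≥ 5 be prime and let k, k', l, l' ∈ {0,…,M−1} with k ≠ k'. Then the inner product of the Gabor frame vectors g_{k,l} and g_{k',l'} has modulus exactly √M: |⟨g_{k,l}, g_{k',l'}⟩| = √M. -/
open scoped BigOperators

/-- The Gabor frame vector `g_{k,l} ∈ ℂ^M`, with
`g_{k,l}(m) = exp(2πi·((m−k)³ + l·m)/M)`. -/
noncomputable def gabor (M : ℕ) (k l : Fin M) : Fin M → ℂ :=
  fun m => Complex.exp (2 * Real.pi * Complex.I *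
    ((((m : ℕ) : ℂ) - ((k : ℕ) : ℂ)) ^ 3 + ((l : ℕ) : ℂ) * ((m : ℕ) : ℂ)) / (M : ℂ))

/-- The inner product `⟨u,v⟩ = ∑_{m} u(m)·conj(v(m))` on `ℂ^M`. -/
noncomputable def gip (M : ℕ) (u v : Fin M → ℂ) : ℂ :=
  ∑ m : Fin M, u m * (starRingEnd ℂ) (v m)


/-- For a prime `M ≥ 5` and distinct shift indices `k ≠ k'`, the inner product of
`g_{k,l}` and `g_{k',l'}` has modulus exactly `√M`. -/
theorem gabor_cross_shift_abs (M : ℕ) (hM : Nat.Prime M) (hM5 : 5 ≤ M)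
    (k k' l l' : Fin M) (hkk' : k ≠ k') :
    ‖gip M (gabor M k l) (gabor M k' l')‖ = Real.sqrt M := by
  haveI : Fact (Nat.Prime M) := ⟨hM⟩
  haveI : NeZero M := ⟨hM.ne_zero⟩
  have hMC : (M : ℂ) ≠ 0 := by exact_mod_cast hM.ne_zero
  set ψ : AddChar (ZMod M) ℂ := ZMod.stdAddChar with hψ
  set κ : ZMod M := ((k : ℕ) : ZMod M) with hκ
  set κ' : ZMod M := ((k' : ℕ) : ZMod M) with hκ'
  set μ : ZMod M := ((l : ℕ) : ZMod M) with hμ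
  set μ' : ZMod M := ((l' : ℕ) : ZMod M) with hμ'
  set G : ZMod M → ZMod M := fun x => (x - κ)^3 - (x - κ')^3 + (μ - μ') * x with hG
  set a : ZMod M := 3 * (κ' - κ) with ha
  set b : ZMod M := 3 * (κ^2 - κ'^2) + μ - μ' with hb
  -- a ≠ 0 and 2 ≠ 0
  have h3 : (3 : ZMod M) ≠ 0 := by
    have : ¬ (M ∣ 3) := fun h => absurd (Nat.le_of_dvd (by norm_num) h) (by omega)
    simpa [ZMod.natCast_eq_zero_iff] using
      (fun h => this ((ZMod.natCast_eq_zero_iff 3 M).mp (by exact_mod_cast h)))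
  have h2 : (2 : ZMod M) ≠ 0 := by
    have : ¬ (M ∣ 2) := fun h => absurd (Nat.le_of_dvd (by norm_num) h) (by omega)
    exact fun h => this ((ZMod.natCast_eq_zero_iff 2 M).mp (by exact_mod_cast h))
  have hκκ : κ' - κ ≠ 0 := by
    intro h
    apply hkk'
    have : κ = κ' := by linear_combination -h
    have := congrArg ZMod.val this
    rw [hκ, hκ', ZMod.val_cast_of_lt k.isLt, ZMod.val_cast_of_lt k'.isLt] at this
    exact Fin.val_injective this
  have haz : a ≠ 0 := mul_ne_zero h3 hκκ
  -- conjugation of ψ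
  have hconj : ∀ x : ZMod M, (starRingEnd ℂ) (ψ x) = ψ (-x) := by
    intro x
    obtain ⟨j, rfl⟩ := ZMod.intCast_surjective x
    rw [hψ, ZMod.stdAddChar_coe, ← Int.cast_neg, ZMod.stdAddChar_coe, ← Complex.exp_conj]
    congr 1
    simp [map_div₀, Complex.conj_I, map_ofNat]
  -- orthogonality
  have h1 : ∀ t : ZMod M, ∑ n : ZMod M, ψ (t * n) = if t = 0 then (M : ℂ) else 0 := by
    intro t
    split_ifs with h
    · simp [h, ZMod.card]
    · exact AddChar.sum_eq_zero_of_ne_one (ZMod.isPrimitive_stdAddChar M h)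
  -- the sum as a character sum
  have hterm : ∀ m : Fin M,
      gabor M k l m * (starRingEnd ℂ) (gabor M k' l' m) = ψ (G (((m : ℕ) : ZMod M))) := by
    intro m
    set j : ℤ := (((m : ℕ) : ℤ) - ((k : ℕ) : ℤ))^3 - (((m : ℕ) : ℤ) - ((k' : ℕ) : ℤ))^3
      + (((l : ℕ) : ℤ) - ((l' : ℕ) : ℤ)) * ((m : ℕ) : ℤ) with hj
    have hGj : G (((m : ℕ) : ZMod M)) = ((j : ℤ) : ZMod M) := by
      rw [hG, hj]
      push_cast
      ring
    rw [hGj, hψ, ZMod.stdAddChar_coe]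
    rw [gabor, gabor, ← Complex.exp_conj, ← Complex.exp_add]
    congr 1
    rw [hj, map_div₀]
    simp only [map_mul, map_add, map_sub, map_pow, Complex.conj_I, map_natCast, map_ofNat,
      Complex.conj_ofReal]
    field_simp
    push_cast
    ring
  set S : ℂ := gip M (gabor M k l) (gabor M k' l') with hS
  have hSsum : S = ∑ x : ZMod M, ψ (G x) := by
    rw [hS, gip]
    rw [Finset.sum_congr rfl (fun m _ => hterm m)]
    have hinj : Function.Injective (fun m : Fin M => ((m : ℕ) : ZMod M)) := by
      intro m m' h
      have h2 := congrArg ZMod.val h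
      rw [ZMod.val_cast_of_lt m.isLt, ZMod.val_cast_of_lt m'.isLt] at h2
      exact Fin.val_injective h2
    have hbij : Function.Bijective (fun m : Fin M => ((m : ℕ) : ZMod M)) :=
      (Fintype.bijective_iff_injective_and_card _).mpr ⟨hinj, by simp [ZMod.card]⟩
    exact Fintype.sum_bijective _ hbij _ _ (fun m => rfl)
  -- the key computation
  have key : S * (starRingEnd ℂ) S = (M : ℂ) := by
    rw [hSsum, map_sum, Finset.sum_mul_sum]
    have step1 : ∀ y x : ZMod M, ψ (G x) * (starRingEnd ℂ) (ψ (G y)) = ψ (G x - G y) := by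
      intro y x
      rw [hconj, ← AddChar.map_add_eq_mul, sub_eq_add_neg]
    calc ∑ x : ZMod M, ∑ y : ZMod M, ψ (G x) * (starRingEnd ℂ) (ψ (G y))
        = ∑ y : ZMod M, ∑ x : ZMod M, ψ (G x - G y) := by
          rw [Finset.sum_comm]
          exact Finset.sum_congr rfl fun y _ => Finset.sum_congr rfl fun x _ => step1 y x
      _ = ∑ y : ZMod M, ∑ d : ZMod M, ψ (G (y + d) - G y) := by
          refine Finset.sum_congr rfl fun y _ => ?_
          exact (Fintype.sum_equiv (Equiv.addLeft y)
            (fun d => ψ (G (y + d) - G y)) (fun x => ψ (G x - G y)) (fun d => rfl)).symm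
      _ = ∑ d : ZMod M, ψ (a * d^2 + b * d) * ∑ y : ZMod M, ψ ((2 * a * d) * y) := by
          rw [Finset.sum_comm]
          refine Finset.sum_congr rfl fun d _ => ?_
          rw [Finset.mul_sum]
          refine Finset.sum_congr rfl fun y _ => ?_
          rw [← AddChar.map_add_eq_mul]
          congr 1
          rw [hG, ha, hb]
          ring
      _ = ∑ d : ZMod M, if d = 0 then ψ (a * d^2 + b * d) * (M : ℂ) else 0 := by
          refine Finset.sum_congr rfl fun d _ => ?_
          rw [h1]
          by_cases hd : d = 0
          · simp [hd]
          · have : 2 * a * d ≠ 0 := mul_ne_zero (mul_ne_zero h2 haz) hd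
            simp [hd, this]
      _ = (M : ℂ) := by
          rw [Finset.sum_ite_eq' Finset.univ (0 : ZMod M)
            (fun d => ψ (a * d^2 + b * d) * (M : ℂ))]
          simp
  -- conclude
  have habs : ‖S‖^2 = (M : ℝ) := by
    have h := key
    rw [Complex.mul_conj] at h
    have h' : Complex.normSq S = (M : ℝ) := by exact_mod_cast h
    rw [Complex.sq_norm, h']
  rw [← habs, Real.sqrt_sq (norm_nonneg S)]
end

section
/- Let M ≥ 5 be prime. For any two distinct index pairs (k,l) ≠ (k',l') with k, k', l, l' ∈ {0,…,M−1}, the modulus of the inner product of the corresponding Gabor frame vectors takes one of exactly two values: |⟨g_{k,l}, g_{k',l'}⟩| ∈ {0, √M}. (Equivalently, after normalizing each vector to unit norm, the correlation modulus lies in {0, 1/√M}.) -/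
open scoped BigOperators

lemma sum_char_mul_eq_zero {M : ℕ} [NeZero M] {c : ZMod M} (hc : c ≠ 0) :
    ∑ x : ZMod M, ZMod.stdAddChar (c * x) = 0 := by
  have h := ZMod.isPrimitive_stdAddChar M hc
  have h2 : (AddChar.mulShift ZMod.stdAddChar c) ≠ 0 :=
    AddChar.ne_zero_iff.mpr (AddChar.ne_one_iff.mp h)
  simpa [AddChar.mulShift_apply] using AddChar.sum_eq_zero_iff_ne_zero.mpr h2

lemma conj_stdAddChar {M : ℕ} [NeZero M] (j : ℤ) :
    (starRingEnd ℂ) (ZMod.stdAddChar ((j : ℤ) : ZMod M)) =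
      ZMod.stdAddChar (((-j : ℤ)) : ZMod M) := by
  rw [ZMod.stdAddChar_coe, ZMod.stdAddChar_coe, ← Complex.exp_conj]
  congr 1
  simp [map_div₀, Complex.conj_I, Complex.conj_ofReal, map_ofNat]

lemma conj_stdAddChar' {M : ℕ} [NeZero M] (x : ZMod M) :
    (starRingEnd ℂ) (ZMod.stdAddChar x) = ZMod.stdAddChar (-x) := by
  have h := conj_stdAddChar (M := M) (x.val : ℤ)
  simpa [ZMod.natCast_zmod_val] using h

lemma gabor_eq {M : ℕ} [NeZero M] (k l m : Fin M) :
    gabor M k l m =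
      ZMod.stdAddChar (((((m:ℤ) - (k:ℤ))^3 + (l:ℤ)*(m:ℤ) : ℤ)) : ZMod M) := by
  rw [ZMod.stdAddChar_coe, gabor]
  congr 1
  push_cast
  ring

lemma abs_sum_cubic (M : ℕ) [NeZero M] (hM : Nat.Prime M) (hM5 : 5 ≤ M) (K K' L L' : ZMod M)
    (h : (K, L) ≠ (K', L')) :
    ‖(∑ x : ZMod M,
        ZMod.stdAddChar ((x - K)^3 + L*x - ((x - K')^3 + L'*x)))‖ ∈
      ({0, Real.sqrt M} : Set ℝ) := by
  haveI : Fact (Nat.Prime M) := ⟨hM⟩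
  set ψ : AddChar (ZMod M) ℂ := ZMod.stdAddChar with hψ
  by_cases hK : K = K'
  · -- degenerate case: linear character sum, vanishes
    have hL : L ≠ L' := by
      intro hL; exact h (by rw [hK, hL])
    have hLL : L - L' ≠ 0 := sub_ne_zero.mpr hL
    left
    have : ∀ x : ZMod M, (x - K)^3 + L*x - ((x - K')^3 + L'*x) = (L - L') * x := by
      intro x; rw [hK]; ring
    simp only [this]
    rw [sum_char_mul_eq_zero hLL]
    simp
  · -- main case: quadratic Gauss-type sum
    right
    set A : ZMod M := 3 * (K' - K) with hA
    set B : ZMod M := 3 * (K^2 - K'^2) + (L - L') with hB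
    have h3 : (3 : ZMod M) ≠ 0 := by
      intro h0
      have h0' : ((3:ℕ) : ZMod M) = 0 := by exact_mod_cast h0
      have := Nat.le_of_dvd (by norm_num) ((ZMod.natCast_eq_zero_iff 3 M).mp h0')
      omega
    have h2 : (2 : ZMod M) ≠ 0 := by
      intro h0
      have h0' : ((2:ℕ) : ZMod M) = 0 := by exact_mod_cast h0
      have := Nat.le_of_dvd (by norm_num) ((ZMod.natCast_eq_zero_iff 2 M).mp h0')
      omega
    have hAne : A ≠ 0 := mul_ne_zero h3 (sub_ne_zero.mpr (Ne.symm hK))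
    set S : ℂ := ∑ x : ZMod M, ψ ((x - K)^3 + L*x - ((x - K')^3 + L'*x)) with hS
    set P : ZMod M → ZMod M := fun x => (x - K)^3 + L*x - ((x - K')^3 + L'*x) with hPdef
    have hSS : S * (starRingEnd ℂ) S = (M : ℂ) := by
      have hconjS : (starRingEnd ℂ) S = ∑ y : ZMod M, ψ (-(P y)) := by
        rw [hS, map_sum]
        exact Finset.sum_congr rfl fun y _ => conj_stdAddChar' _
      rw [hS, hconjS, Finset.sum_mul_sum]
      have e1 : ∀ x y : ZMod M, ψ (P x) * ψ (-(P y)) = ψ (P x - P y) := by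
        intro x y
        rw [← AddChar.map_add_eq_mul, sub_eq_add_neg]
      change ∑ i, ∑ j, ψ (P i) * ψ (-P j) = _
      simp only [e1]
      rw [Finset.sum_comm]
      have e2 : ∀ y : ZMod M, ∑ x : ZMod M, ψ (P x - P y)
          = ∑ d : ZMod M, ψ (A*d^2 + B*d) * ψ ((2*A*d) * y) := by
        intro y
        rw [← Fintype.sum_equiv (Equiv.addRight y)
          (fun d => ψ (A*d^2 + B*d) * ψ ((2*A*d) * y)) (fun x => ψ (P x - P y)) ?_]
        intro d
        simp only [Equiv.coe_addRight]
        rw [← AddChar.map_add_eq_mul]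
        congr 1
        simp only [hPdef, hA, hB]
        ring
      simp only [e2]
      rw [Finset.sum_comm]
      have e3 : ∀ d : ZMod M, ∑ y : ZMod M, ψ (A*d^2 + B*d) * ψ ((2*A*d) * y)
          = ψ (A*d^2 + B*d) * ∑ y : ZMod M, ψ ((2*A*d) * y) := by
        intro d; rw [Finset.mul_sum]
      simp only [e3]
      rw [Fintype.sum_eq_single (0 : ZMod M) ?_]
      · simp [AddChar.map_zero_eq_one, ZMod.card]
      · intro d hd
        have : (2*A*d) ≠ 0 := mul_ne_zero (mul_ne_zero h2 hAne) hd
        rw [sum_char_mul_eq_zero this, mul_zero]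
    have h1 : (Complex.normSq S : ℂ) = (M : ℂ) := by rw [← Complex.mul_conj]; exact hSS
    have h2' : Complex.normSq S = (M : ℝ) := by exact_mod_cast h1
    show ‖S‖ = Real.sqrt M
    rw [Complex.norm_def, h2']


/-- For a prime `M ≥ 5` and distinct index pairs `(k,l) ≠ (k',l')`, the modulus of the
inner product of the corresponding Gabor vectors is either `0` or `√M`. -/
theorem gabor_two_valued_correlation (M : ℕ) (hM : Nat.Prime M) (hM5 : 5 ≤ M)
    (k k' l l' : Fin M) (h : (k, l) ≠ (k', l')) :
    ‖gip M (gabor M k l) (gabor M k' l')‖ ∈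
      ({0, Real.sqrt M} : Set ℝ) := by
  haveI : NeZero M := ⟨hM.pos.ne'⟩
  have hinj : Function.Injective (fun m : Fin M => ((m : ℕ) : ZMod M)) := by
    intro a b hab
    have := congrArg ZMod.val hab
    rwa [ZMod.val_cast_of_lt a.isLt, ZMod.val_cast_of_lt b.isLt, ← Fin.ext_iff] at this
  have hbij : Function.Bijective (fun m : Fin M => ((m : ℕ) : ZMod M)) :=
    (Fintype.bijective_iff_injective_and_card _).mpr ⟨hinj, by simp [ZMod.card]⟩
  have hgip : gip M (gabor M k l) (gabor M k' l') =
      ∑ x : ZMod M, ZMod.stdAddChar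
        ((x - ((k:ℕ):ZMod M))^3 + ((l:ℕ):ZMod M)*x
          - ((x - ((k':ℕ):ZMod M))^3 + ((l':ℕ):ZMod M)*x)) := by
    rw [gip, ← Function.Bijective.sum_comp hbij]
    apply Finset.sum_congr rfl
    intro m _
    rw [gabor_eq, gabor_eq, conj_stdAddChar, ← AddChar.map_add_eq_mul]
    congr 1
    push_cast
    ring
  rw [hgip]
  apply abs_sum_cubic M hM hM5
  intro hc
  apply h
  have h1 : ((k:ℕ):ZMod M) = ((k':ℕ):ZMod M) := congrArg Prod.fst hc
  have h2 : ((l:ℕ):ZMod M) = ((l':ℕ):ZMod M) := congrArg Prod.snd hc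
  exact Prod.ext (hinj h1) (hinj h2)
end

section
/- Let M ≥ 5 be prime, let ñ ≥ 1 be such that (ñ − 1) < √M (e.g. any ñ ≤ √M), let k_1,…,k_ñ ∈ {0,…,M−1} be pairwise distinct, and let l_1,…,l_ñ ∈ {0,…,M−1} be arbitrary. Then the vectors g_{k_1,l_1},…,g_{k_ñ,l_ñ} are linearly independent in ℂ^M. -/
open scoped BigOperators

namespace GaborAux

/-- primitive `M`-th root of unity -/
noncomputable def ζ (M : ℕ) : ℂ := Complex.exp (2 * Real.pi * Complex.I / M)

/-- the standard additive character of `ZMod M` -/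
noncomputable def χ (M : ℕ) (x : ZMod M) : ℂ := ζ M ^ x.val

variable {M : ℕ}

lemma zeta_pow_M (hM : M ≠ 0) : ζ M ^ M = 1 :=
  (Complex.isPrimitiveRoot_exp M hM).pow_eq_one

lemma zeta_ne_one (hM : 2 ≤ M) : ζ M ≠ 1 := by
  have h := (Complex.isPrimitiveRoot_exp M (by omega)).pow_ne_one_of_pos_of_lt
    (l := 1) one_ne_zero (by omega)
  simpa [ζ] using h

lemma zeta_pow_mod (hM : M ≠ 0) (n : ℕ) : ζ M ^ n = ζ M ^ (n % M) := by
  conv_lhs => rw [← Nat.mod_add_div n M]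
  rw [pow_add, pow_mul, zeta_pow_M hM, one_pow, mul_one]

lemma chi_add [NeZero M] (x y : ZMod M) : χ M (x + y) = χ M x * χ M y := by
  rw [χ, χ, χ, ZMod.val_add, ← zeta_pow_mod (NeZero.ne M), pow_add]

lemma chi_zero : χ M 0 = 1 := by
  rw [χ, ZMod.val_zero, pow_zero]

lemma chi_natCast [NeZero M] (a : ℕ) :
    Complex.exp (2 * Real.pi * Complex.I * a / M) = χ M (a : ZMod M) := by
  have h : 2 * Real.pi * Complex.I * a / M = a * (2 * Real.pi * Complex.I / M) := by ring
  rw [h, Complex.exp_nat_mul, χ, ZMod.val_natCast, ← zeta_pow_mod (NeZero.ne M), ζ]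

lemma chi_intCast [NeZero M] (a : ℤ) :
    Complex.exp (2 * Real.pi * Complex.I * a / M) = χ M (a : ZMod M) := by
  set r : ℕ := ((a : ZMod M)).val with hr
  have hcast : ((r : ℤ) : ZMod M) = (a : ZMod M) := by
    push_cast
    exact ZMod.natCast_rightInverse (a : ZMod M)
  have hdvd : (M : ℤ) ∣ (a - r) := by
    rw [← ZMod.intCast_zmod_eq_zero_iff_dvd]
    push_cast
    rw [sub_eq_zero]
    exact_mod_cast hcast.symm
  obtain ⟨q, hq⟩ := hdvd
  have ha : (a : ℂ) = (r : ℂ) + (M : ℂ) * (q : ℂ) := by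
    have : (a : ℤ) = r + M * q := by omega
    exact_mod_cast congrArg (fun z : ℤ => (z : ℂ)) this
  have hM0 : (M : ℂ) ≠ 0 := Nat.cast_ne_zero.mpr (NeZero.ne M)
  have hsplit : 2 * Real.pi * Complex.I * a / M
      = 2 * Real.pi * Complex.I * r / M + (q : ℂ) * (2 * Real.pi * Complex.I) := by
    rw [ha]; field_simp
  rw [hsplit, Complex.exp_add, Complex.exp_int_mul_two_pi_mul_I, mul_one,
    chi_natCast, ← hcast]
  push_cast
  rfl

lemma chi_norm [NeZero M] (x : ZMod M) : ‖χ M x‖ = 1 := by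
  rw [χ, norm_pow, ζ]
  have h : 2 * Real.pi * Complex.I / M = ((2 * Real.pi / M : ℝ) : ℂ) * Complex.I := by
    push_cast; ring
  rw [h, Complex.norm_exp_ofReal_mul_I, one_pow]

lemma chi_conj [NeZero M] (x : ZMod M) :
    (starRingEnd ℂ) (χ M x) = χ M (-x) := by
  have h1 : χ M x * χ M (-x) = 1 := by
    rw [← chi_add, add_neg_cancel, chi_zero]
  have h2 : (χ M x)⁻¹ = (starRingEnd ℂ) (χ M x) := Complex.inv_eq_conj (chi_norm x)
  have hx : χ M x ≠ 0 := by
    intro h; rw [h, zero_mul] at h1; exact zero_ne_one h1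
  rw [← h2, inv_eq_of_mul_eq_one_right h1]

lemma zmod_cast_bij [NeZero M] :
    Function.Bijective (fun m : Fin M => ((m : ℕ) : ZMod M)) := by
  rw [Fintype.bijective_iff_injective_and_card]
  refine ⟨fun a b hab => ?_, by simp [ZMod.card]⟩
  have h := congrArg ZMod.val hab
  simpa [ZMod.val_cast_of_lt a.2, ZMod.val_cast_of_lt b.2, Fin.ext_iff] using h

lemma sum_chi [NeZero M] (hM : 2 ≤ M) : ∑ x : ZMod M, χ M x = 0 := by
  have h1 : ∑ x : ZMod M, χ M x = ∑ m : Fin M, χ M ((m : ℕ) : ZMod M) :=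
    (Fintype.sum_bijective _ zmod_cast_bij _ _ (fun m => rfl)).symm
  have h2 : ∀ m : Fin M, χ M ((m : ℕ) : ZMod M) = ζ M ^ (m : ℕ) := by
    intro m
    rw [χ, ZMod.val_natCast, Nat.mod_eq_of_lt m.2]
  rw [h1, Finset.sum_congr rfl (fun m _ => h2 m), Fin.sum_univ_eq_sum_range (fun j => ζ M ^ j),
    geom_sum_eq (zeta_ne_one hM), zeta_pow_M (by omega), sub_self, zero_div]

lemma sum_chi_mul [NeZero M] (hp : M.Prime) (a : ZMod M) (ha : a ≠ 0) :
    ∑ x : ZMod M, χ M (a * x) = 0 := by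
  haveI := Fact.mk hp
  rw [Fintype.sum_bijective (fun x : ZMod M => a * x) ((Equiv.mulLeft₀ a ha).bijective)
    (fun x => χ M (a * x)) (χ M) (fun x => rfl)]
  exact sum_chi hp.two_le

lemma gauss_norm [NeZero M] (hp : M.Prime) (hM5 : 5 ≤ M) (a b : ZMod M) (ha : a ≠ 0) :
    ‖∑ x : ZMod M, χ M (a * x ^ 2 + b * x)‖ = Real.sqrt M := by
  haveI := Fact.mk hp
  have h2 : (2 : ZMod M) ≠ 0 := by
    have h : ((2 : ℕ) : ZMod M) ≠ 0 := by
      rw [Ne, ZMod.natCast_eq_zero_iff]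
      intro h; have := Nat.le_of_dvd (by norm_num) h; omega
    exact_mod_cast h
  set S := ∑ x : ZMod M, χ M (a * x ^ 2 + b * x) with hS
  have key : S * (starRingEnd ℂ) S = (M : ℂ) := by
    calc S * (starRingEnd ℂ) S
        = ∑ x : ZMod M, ∑ y : ZMod M,
            χ M ((a * x ^ 2 + b * x) - (a * y ^ 2 + b * y)) := by
          rw [hS, map_sum, Finset.sum_mul_sum]
          refine Finset.sum_congr rfl fun x _ => Finset.sum_congr rfl fun y _ => ?_
          rw [chi_conj, ← chi_add, sub_eq_add_neg]
      _ = ∑ y : ZMod M, ∑ d : ZMod M,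
            χ M (a * d ^ 2 + b * d) * χ M ((2 * a * d) * y) := by
          rw [Finset.sum_comm]
          refine Finset.sum_congr rfl fun y _ => ?_
          refine (Fintype.sum_bijective (fun d : ZMod M => y + d) (Equiv.addLeft y).bijective
            (fun d => χ M (a * d ^ 2 + b * d) * χ M ((2 * a * d) * y))
            (fun x => χ M ((a * x ^ 2 + b * x) - (a * y ^ 2 + b * y))) (fun d => ?_)).symm
          show χ M (a * d ^ 2 + b * d) * χ M ((2 * a * d) * y)
            = χ M ((a * (y + d) ^ 2 + b * (y + d)) - (a * y ^ 2 + b * y))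
          rw [← chi_add]
          congr 1
          ring
      _ = ∑ d : ZMod M, χ M (a * d ^ 2 + b * d) * ∑ y : ZMod M, χ M ((2 * a * d) * y) := by
          rw [Finset.sum_comm]
          exact Finset.sum_congr rfl fun d _ => (Finset.mul_sum _ _ _).symm
      _ = (M : ℂ) := by
          rw [Finset.sum_eq_single 0]
          · simp [chi_zero, Finset.card_univ, ZMod.card]
          · intro d _ hd
            have hne : (2 * a * d) ≠ 0 := mul_ne_zero (mul_ne_zero h2 ha) hd
            rw [sum_chi_mul hp _ hne, mul_zero]
          · intro h; exact absurd (Finset.mem_univ 0) h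
  have hnsq : Complex.normSq S = (M : ℝ) := by
    rw [Complex.mul_conj] at key
    exact_mod_cast key
  rw [Complex.norm_def, hnsq]

lemma gabor_eq [NeZero M] (k l m : Fin M) :
    gabor M k l m
      = χ M ((((m : ℕ) : ZMod M) - ((k : ℕ) : ZMod M)) ^ 3
          + ((l : ℕ) : ZMod M) * ((m : ℕ) : ZMod M)) := by
  rw [gabor]
  have h : 2 * Real.pi * Complex.I *
      ((((m : ℕ) : ℂ) - ((k : ℕ) : ℂ)) ^ 3 + ((l : ℕ) : ℂ) * ((m : ℕ) : ℂ)) / (M : ℂ)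
      = 2 * Real.pi * Complex.I *
        ((((((m : ℕ) : ℤ) - ((k : ℕ) : ℤ)) ^ 3 + ((l : ℕ) : ℤ) * ((m : ℕ) : ℤ)) : ℤ) : ℂ)
          / (M : ℂ) := by
    push_cast; ring
  rw [h, chi_intCast]
  congr 1
  push_cast
  ring

lemma gip_self [NeZero M] (k l : Fin M) : gip M (gabor M k l) (gabor M k l) = M := by
  rw [gip]
  have h : ∀ m : Fin M, gabor M k l m * (starRingEnd ℂ) (gabor M k l m) = 1 := by
    intro m
    rw [gabor_eq, chi_conj, ← chi_add, add_neg_cancel, chi_zero]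
  rw [Finset.sum_congr rfl fun m _ => h m]
  simp

lemma gip_abs [NeZero M] (hp : M.Prime) (hM5 : 5 ≤ M) (k l k' l' : Fin M) (hkk : k ≠ k') :
    ‖gip M (gabor M k l) (gabor M k' l')‖ = Real.sqrt M := by
  haveI := Fact.mk hp
  have hKK : ((k : ℕ) : ZMod M) ≠ ((k' : ℕ) : ZMod M) := by
    intro h
    apply hkk
    have h2 := congrArg ZMod.val h
    rw [ZMod.val_cast_of_lt k.2, ZMod.val_cast_of_lt k'.2] at h2
    exact Fin.ext h2
  have h3 : (3 : ZMod M) ≠ 0 := by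
    have h : ((3 : ℕ) : ZMod M) ≠ 0 := by
      rw [Ne, ZMod.natCast_eq_zero_iff]
      intro h; have := Nat.le_of_dvd (by norm_num) h; omega
    exact_mod_cast h
  have hA : (3 * (((k' : ℕ) : ZMod M) - ((k : ℕ) : ZMod M))) ≠ 0 :=
    mul_ne_zero h3 (sub_ne_zero.mpr (Ne.symm hKK))
  have hgip : gip M (gabor M k l) (gabor M k' l')
      = (∑ x : ZMod M, χ M ((3 * (((k' : ℕ) : ZMod M) - ((k : ℕ) : ZMod M))) * x ^ 2
          + (3 * (((k : ℕ) : ZMod M) ^ 2 - ((k' : ℕ) : ZMod M) ^ 2)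
              + (((l : ℕ) : ZMod M) - ((l' : ℕ) : ZMod M))) * x))
        * χ M (((k' : ℕ) : ZMod M) ^ 3 - ((k : ℕ) : ZMod M) ^ 3) := by
    rw [gip, Finset.sum_mul]
    refine Fintype.sum_bijective (fun m : Fin M => ((m : ℕ) : ZMod M)) zmod_cast_bij _ _
      (fun m => ?_)
    rw [gabor_eq, gabor_eq, chi_conj, ← chi_add, ← chi_add]
    congr 1
    ring
  rw [hgip, norm_mul, chi_norm, mul_one, gauss_norm hp hM5 _ _ hA]

end GaborAux

/-- For a prime `M ≥ 5` and `ñ ≥ 1` with `ñ − 1 < √M`, any `ñ` Gabor vectors with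
pairwise distinct shift indices are linearly independent in `ℂ^M`. -/
theorem gabor_linearIndependent_of_lt_sqrt (M n : ℕ) (hM : Nat.Prime M) (hM5 : 5 ≤ M)
    (hn : 1 ≤ n) (hsmall : (n : ℝ) - 1 < Real.sqrt M)
    (k l : Fin n → Fin M) (hk : Function.Injective k) :
    LinearIndependent ℂ (fun i : Fin n => gabor M (k i) (l i)) := by
  haveI : NeZero M := ⟨by omega⟩
  haveI := Fact.mk hM
  set v : Fin n → Fin M → ℂ := fun i => gabor M (k i) (l i) with hv
  rw [Fintype.linearIndependent_iff]
  intro c hc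
  obtain ⟨i₀, -, hmax⟩ := Finset.exists_max_image Finset.univ (fun i => ‖c i‖)
    ⟨⟨0, hn⟩, Finset.mem_univ _⟩
  have hM0 : (0:ℝ) < M := by positivity
  have hsqrt_pos : (0:ℝ) < Real.sqrt M := Real.sqrt_pos.mpr hM0
  -- the pairing of the relation with v i₀
  have hsum : ∑ j : Fin n, c j * gip M (v j) (v i₀) = 0 := by
    have h1 : ∑ j : Fin n, c j * gip M (v j) (v i₀)
        = ∑ m : Fin M, (∑ j : Fin n, c j • v j) m * (starRingEnd ℂ) (v i₀ m) := by
      simp only [gip, Finset.mul_sum, Finset.sum_apply, Pi.smul_apply, smul_eq_mul,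
        Finset.sum_mul]
      rw [Finset.sum_comm]
      exact Finset.sum_congr rfl fun m _ => Finset.sum_congr rfl fun j _ => (mul_assoc _ _ _).symm
    rw [h1, hc]
    simp
  have hsplit : c i₀ * gip M (v i₀) (v i₀)
      = - ∑ j ∈ Finset.univ.erase i₀, c j * gip M (v j) (v i₀) := by
    have h2 := Finset.sum_erase_add Finset.univ (fun j => c j * gip M (v j) (v i₀))
      (Finset.mem_univ i₀)
    rw [hsum] at h2
    linear_combination h2
  have habs0 : ‖c i₀‖ = 0 := by
    by_contra h0
    have hpos : 0 < ‖c i₀‖ :=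
      lt_of_le_of_ne (norm_nonneg _) (Ne.symm h0)
    have hle : ‖c i₀‖ * M
        ≤ ((n - 1 : ℕ) : ℝ) * (‖c i₀‖ * Real.sqrt M) := by
      calc ‖c i₀‖ * (M : ℝ)
          = ‖c i₀ * gip M (v i₀) (v i₀)‖ := by
            rw [GaborAux.gip_self, norm_mul, Complex.norm_natCast]
        _ = ‖∑ j ∈ Finset.univ.erase i₀, c j * gip M (v j) (v i₀)‖ := by
            rw [hsplit, norm_neg]
        _ ≤ ∑ j ∈ Finset.univ.erase i₀, ‖c j * gip M (v j) (v i₀)‖ :=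
            norm_sum_le _ _
        _ ≤ ∑ j ∈ Finset.univ.erase i₀, ‖c i₀‖ * Real.sqrt M := by
            refine Finset.sum_le_sum fun j hj => ?_
            have hj0 : j ≠ i₀ := Finset.ne_of_mem_erase hj
            have hgabs : ‖gip M (v j) (v i₀)‖ = Real.sqrt M :=
              GaborAux.gip_abs hM hM5 _ _ _ _ (fun h => hj0 (hk h))
            rw [norm_mul, hgabs]
            exact mul_le_mul_of_nonneg_right (hmax j (Finset.mem_univ j))
              (Real.sqrt_nonneg _)
        _ = ((n - 1 : ℕ) : ℝ) * (‖c i₀‖ * Real.sqrt M) := by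
            rw [Finset.sum_const, Finset.card_erase_of_mem (Finset.mem_univ i₀),
              Finset.card_univ, Fintype.card_fin, nsmul_eq_mul]
    have hlt : ((n - 1 : ℕ) : ℝ) * (‖c i₀‖ * Real.sqrt M)
        < Real.sqrt M * (‖c i₀‖ * Real.sqrt M) := by
      apply mul_lt_mul_of_pos_right _ (by positivity)
      calc ((n - 1 : ℕ) : ℝ) = (n : ℝ) - 1 := by
            rw [Nat.cast_sub hn]; norm_num
        _ < Real.sqrt M := hsmall
    have hss : Real.sqrt M * Real.sqrt M = (M : ℝ) := Real.mul_self_sqrt hM0.le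
    have heq : Real.sqrt M * (‖c i₀‖ * Real.sqrt M)
        = ‖c i₀‖ * M := by
      linear_combination ‖c i₀‖ * hss
    rw [heq] at hlt
    exact absurd (lt_of_le_of_lt hle hlt) (lt_irrefl _)
  intro i
  have hi : ‖c i‖ ≤ 0 := habs0 ▸ hmax i (Finset.mem_univ i)
  have : ‖c i‖ = 0 := le_antisymm hi (norm_nonneg _)
  exact norm_eq_zero.mp this
end
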